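/- arXiv:1812.05142 — 2 statements merged into one kernel-verified Lean document; each statement's English description precedes it below -/
import Mathlib

section
/- Let V_AB = [[V_A, X], [Xᵀ, V_B]] be a bipartite quantum covariance matrix (real symmetric with blocks of sizes 2n_A and 2n_B, and V_AB + iΩ_AB positive semidefinite). If det V_A = 1, i.e. the reduction V_A is a pure QCM, then the off-diagonal block vanishes: X = 0, so V_AB = V_A ⊕ V_B. -/
open Matrix ComplexOrder

set_option linter.unusedSectionVars false
set_option maxHeartbeats 1600000

/-- The standard symplectic form on `k` modes: the `2k × 2k` block-diagonal matrix
`⊕_{i=1}^k [[0, 1], [−1, 0]]`. -/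
noncomputable def Omega (k : ℕ) : Matrix (Fin 2 × Fin k) (Fin 2 × Fin k) ℝ :=
  Matrix.blockDiagonal fun _ : Fin k => !![(0 : ℝ), 1; -1, 0]

/-- `V` is a quantum covariance matrix with respect to the symplectic form `Ω`:
the complex Hermitian matrix `V + iΩ` is positive semidefinite. -/
def IsQCM {ι : Type} [Fintype ι] [DecidableEq ι] (Ω V : Matrix ι ι ℝ) : Prop :=
  (V.map (fun x => (x : ℂ)) + Complex.I • Ω.map (fun x => (x : ℂ))).PosSemidef

lemma aux_half {ι : Type} [Fintype ι] [DecidableEq ι] {A : Matrix ι ι ℂ} (h : (A + A).PosSemidef) : A.PosSemidef := by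
  have hH : A.IsHermitian := by
    have h1 := h.1
    rw [Matrix.IsHermitian, conjTranspose_add] at h1
    have h2 : (2 : ℂ) • Aᴴ = (2 : ℂ) • A := by rw [two_smul, two_smul]; exact h1
    exact smul_right_injective _ two_ne_zero h2
  refine PosSemidef.of_dotProduct_mulVec_nonneg hH fun x => ?_
  have h2 := h.dotProduct_mulVec_nonneg x
  rw [add_mulVec, dotProduct_add] at h2
  rw [Complex.le_def] at h2 ⊢
  obtain ⟨ha, hb⟩ := h2
  simp only [Complex.zero_re, Complex.zero_im, Complex.add_re, Complex.add_im] at *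
  constructor <;> [linarith; linarith]


lemma aux_L_eq_one {ι : Type} [Fintype ι] [DecidableEq ι] {L : Matrix ι ι ℂ} (hL : L.PosSemidef) (h1L : (1 - L).PosSemidef)
    (hdet : L.det = 1) : L = 1 := by
  have hLH := hL.1
  -- each eigenvalue is ≤ 1
  have hle1 : ∀ i, hLH.eigenvalues i ≤ 1 := by
    intro i
    set v : ι → ℂ := ⇑(hLH.eigenvectorBasis i) with hv
    have hv0 : v ≠ 0 := by
      intro h0
      have h1 : ‖hLH.eigenvectorBasis i‖ = 1 := hLH.eigenvectorBasis.orthonormal.1 i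
      have : hLH.eigenvectorBasis i = 0 := by
        ext j; exact congrFun h0 j
      rw [this, norm_zero] at h1
      exact zero_ne_one h1
    have hs : star v ⬝ᵥ v ≠ 0 := by
      rwa [ne_eq, dotProduct_star_self_eq_zero]
    have hs0 : 0 ≤ star v ⬝ᵥ v := dotProduct_star_self_nonneg v
    rw [Complex.le_def] at hs0
    have hsim : (star v ⬝ᵥ v).im = 0 := hs0.2.symm
    have hsre : 0 < (star v ⬝ᵥ v).re := by
      rcases lt_or_eq_of_le hs0.1 with h | h
      · exact h
      · exact absurd (Complex.ext h.symm hsim) hs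
    have hmul : (1 - L) *ᵥ v = v - (hLH.eigenvalues i : ℂ) • v := by
      have hsmul : (hLH.eigenvalues i) • v = (hLH.eigenvalues i : ℂ) • v := by
        funext j
        simp only [Pi.smul_apply, Complex.real_smul, smul_eq_mul]
      rw [sub_mulVec, one_mulVec, hLH.mulVec_eigenvectorBasis, hsmul]
    have hq := h1L.dotProduct_mulVec_nonneg v
    rw [hmul, dotProduct_sub, dotProduct_smul] at hq
    rw [Complex.le_def] at hq
    have hre := hq.1
    simp only [Complex.zero_re, Complex.sub_re, Complex.smul_re, smul_eq_mul,
      Complex.ofReal_re, Complex.mul_re, Complex.ofReal_im] at hre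
    -- hre : 0 ≤ (star v ⬝ᵥ v).re - eigenvalue * (star v ⬝ᵥ v).re  (roughly)
    nlinarith [hre, hsre]
  have hge0 : ∀ i, 0 ≤ hLH.eigenvalues i := hL.eigenvalues_nonneg
  have hprod : ∏ i, hLH.eigenvalues i = 1 := by
    have hd := hLH.det_eq_prod_eigenvalues
    rw [hdet] at hd
    have : ((∏ i, hLH.eigenvalues i : ℝ) : ℂ) = ((1 : ℝ) : ℂ) := by
      push_cast
      exact hd.symm
    exact_mod_cast this
  have hone : ∀ i, hLH.eigenvalues i = 1 := by
    intro i
    refine le_antisymm (hle1 i) ?_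
    have h2 : ∏ j ∈ Finset.univ.erase i, hLH.eigenvalues j ≤ 1 :=
      Finset.prod_le_one (fun j _ => hge0 j) (fun j _ => hle1 j)
    have h3 : 0 ≤ ∏ j ∈ Finset.univ.erase i, hLH.eigenvalues j :=
      Finset.prod_nonneg (fun j _ => hge0 j)
    have h4 := Finset.mul_prod_erase Finset.univ hLH.eigenvalues (Finset.mem_univ i)
    nlinarith [hge0 i]
  have hdiag : Matrix.diagonal (RCLike.ofReal ∘ hLH.eigenvalues) = (1 : Matrix ι ι ℂ) := by
    ext i j
    simp [Matrix.diagonal_apply, Matrix.one_apply, hone]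
  rw [hLH.spectral_theorem, hdiag, map_one]

open scoped MatrixOrder in
lemma aux_key {ι : Type} [Fintype ι] [DecidableEq ι] (O V : Matrix ι ι ℂ)
    (hO2 : O * O = -1) (hOT : Oᵀ = -O) (hOH : Oᴴ = -O) (hdetO : O.det = 1)
    (hVT : Vᵀ = V) (hVH : Vᴴ = V) (hdetV : V.det = 1)
    (hp : (V + Complex.I • O).PosSemidef) (hm : (V - Complex.I • O).PosSemidef) :
    (V + Complex.I • O) * V⁻¹ * (V - Complex.I • O) = 0 := by
  have hIV : IsUnit V.det := by rw [hdetV]; exact isUnit_one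
  have hVR : V * V⁻¹ = 1 := mul_nonsing_inv V hIV
  have hRV : V⁻¹ * V = 1 := nonsing_inv_mul V hIV
  have hc1 : ∀ M : Matrix ι ι ℂ, V * (V⁻¹ * M) = M := fun M => by
    rw [← mul_assoc, hVR, one_mul]
  have hc2 : ∀ M : Matrix ι ι ℂ, V⁻¹ * (V * M) = M := fun M => by
    rw [← mul_assoc, hRV, one_mul]
  have hd1 : ∀ M : Matrix ι ι ℂ, O * (O * M) = -M := fun M => by
    rw [← mul_assoc, hO2, neg_mul, one_mul]
  have hRH : (V⁻¹)ᴴ = V⁻¹ := by rw [conjTranspose_nonsing_inv, hVH]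
  have hRT : (V⁻¹)ᵀ = V⁻¹ := by rw [transpose_nonsing_inv, hVT]
  have hVpsd : V.PosSemidef := by
    apply aux_half
    have h2 := hp.add hm
    have heq : (V + Complex.I • O) + (V - Complex.I • O) = V + V := by abel
    rwa [heq] at h2
  have hRpsd : (V⁻¹).PosSemidef := hVpsd.inv
  -- the matrix S
  have hSH : (1 - Complex.I • (V⁻¹ * O))ᴴ = 1 - Complex.I • (O * V⁻¹) := by
    simp only [conjTranspose_sub, conjTranspose_one, conjTranspose_smul, conjTranspose_mul,
      hOH, hRH, Complex.star_def, Complex.conj_I, neg_mul, neg_smul, smul_neg, neg_neg]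
  have stepA : (V + Complex.I • O) * (1 - Complex.I • (V⁻¹ * O)) = V + O * V⁻¹ * O := by
    simp only [mul_sub, sub_mul, mul_add, add_mul, mul_one, one_mul, smul_mul_assoc,
      mul_smul_comm, smul_smul, Complex.I_mul_I, neg_smul, one_smul, neg_one_smul, neg_neg,
      smul_add, smul_sub, smul_neg, mul_assoc, hc1, hc2, hd1, hVR, hRV]
    abel
  have hPval : (1 - Complex.I • (V⁻¹ * O))ᴴ * (V + Complex.I • O) * (1 - Complex.I • (V⁻¹ * O))
      = (V + O * V⁻¹ * O) - Complex.I • (O + O * (V⁻¹ * (O * (V⁻¹ * O)))) := by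
    rw [mul_assoc, stepA, hSH]
    simp only [mul_sub, sub_mul, mul_add, add_mul, mul_one, one_mul, smul_mul_assoc,
      mul_smul_comm, smul_smul, Complex.I_mul_I, neg_smul, one_smul, neg_one_smul, neg_neg,
      smul_add, smul_sub, smul_neg, mul_assoc, hc1, hc2, hd1, hVR, hRV]
    abel
  have hPpsd := hp.conjTranspose_mul_mul_same (1 - Complex.I • (V⁻¹ * O))
  rw [hPval] at hPpsd
  have hPTpsd := hPpsd.transpose
  have hPTval : ((V + O * V⁻¹ * O) - Complex.I • (O + O * (V⁻¹ * (O * (V⁻¹ * O)))))ᵀ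
      = (V + O * V⁻¹ * O) + Complex.I • (O + O * (V⁻¹ * (O * (V⁻¹ * O)))) := by
    simp only [transpose_sub, transpose_add, transpose_smul, transpose_mul, hOT, hRT, hVT,
      neg_mul, mul_neg, neg_neg, smul_add, smul_neg, neg_smul, mul_assoc, sub_neg_eq_add]
    abel
  rw [hPTval] at hPTpsd
  have hTpsd : (V + O * V⁻¹ * O).PosSemidef := by
    apply aux_half
    have h2 := hPpsd.add hPTpsd
    have heq : ((V + O * V⁻¹ * O) - Complex.I • (O + O * (V⁻¹ * (O * (V⁻¹ * O)))))
        + ((V + O * V⁻¹ * O) + Complex.I • (O + O * (V⁻¹ * (O * (V⁻¹ * O)))))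
        = (V + O * V⁻¹ * O) + (V + O * V⁻¹ * O) := by abel
    rwa [heq] at h2
  -- the square root W of V⁻¹
  set W := CFC.sqrt V⁻¹ with hWdef
  have hWH : Wᴴ = W := (Matrix.nonneg_iff_posSemidef.mp (CFC.sqrt_nonneg _)).1
  have hWW : W * W = V⁻¹ := CFC.sqrt_mul_sqrt_self V⁻¹ (Matrix.nonneg_iff_posSemidef.mpr hRpsd)
  have hWl : W * (W * V) = 1 := by rw [← mul_assoc, hWW, hRV]
  have hWr : (W * V) * W = 1 := mul_eq_one_comm.mp hWl
  have hWVW : W * V * W = 1 := hWr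
  have hdetWW : W.det * W.det = 1 := by
    rw [← det_mul, hWW, det_nonsing_inv, hdetV]; simp
  -- the matrix L
  have hM0H : (W * O * W)ᴴ = -(W * O * W) := by
    simp only [conjTranspose_mul, hWH, hOH, mul_neg, neg_mul, mul_assoc]
  have hLpsd := posSemidef_conjTranspose_mul_self (W * O * W)
  have hLval : (W * O * W)ᴴ * (W * O * W) = -(W * (O * (V⁻¹ * (O * W)))) := by
    rw [hM0H]
    have hWc : ∀ M : Matrix ι ι ℂ, W * (W * M) = V⁻¹ * M := fun M => by
      rw [← mul_assoc, hWW]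
    simp only [neg_mul, mul_assoc, hWc]
  have h1mL : (1 : Matrix ι ι ℂ) - (W * O * W)ᴴ * (W * O * W) = Wᴴ * (V + O * V⁻¹ * O) * W := by
    rw [hLval, hWH]
    have hWc : ∀ M : Matrix ι ι ℂ, W * (W * M) = V⁻¹ * M := fun M => by
      rw [← mul_assoc, hWW]
    simp only [mul_add, add_mul, mul_assoc, sub_neg_eq_add]
    rw [← mul_assoc W V W, hWVW]
  have h1Lpsd : ((1 : Matrix ι ι ℂ) - (W * O * W)ᴴ * (W * O * W)).PosSemidef := by
    rw [h1mL]; exact hTpsd.conjTranspose_mul_mul_same W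
  have hdetL : ((W * O * W)ᴴ * (W * O * W)).det = 1 := by
    have hdM : (W * O * W).det = 1 := by
      rw [det_mul, det_mul, hdetO]
      calc W.det * 1 * W.det = W.det * W.det := by ring
        _ = 1 := hdetWW
    rw [det_mul, det_conjTranspose, hdM]
    simp
  have hL1 := aux_L_eq_one hLpsd h1Lpsd hdetL
  -- deduce O * V⁻¹ * O = -V
  have hWXW : W * (O * (V⁻¹ * (O * W))) = -1 := by
    have h := hLval.symm.trans hL1
    exact neg_eq_iff_eq_neg.mp h
  have hOVO : O * (V⁻¹ * O) = -V := by
    have e1 : (W * V) * (W * (O * (V⁻¹ * (O * W)))) * (W * V) = (W*V) * (-1) * (W*V) := by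
      rw [hWXW]
    have e2 : (W * V) * (W * (O * (V⁻¹ * (O * W)))) * (W * V) = O * (V⁻¹ * O) := by
      calc (W * V) * (W * (O * (V⁻¹ * (O * W)))) * (W * V)
          = ((W * V) * W) * (O * (V⁻¹ * (O * (W * (W * V))))) := by
            simp only [mul_assoc]
        _ = O * (V⁻¹ * O) := by rw [hWl, hWr, mul_one, one_mul]
    have e3 : (W*V) * (-1 : Matrix ι ι ℂ) * (W*V) = -(W * (V * (W * V))) := by
      simp only [mul_neg, neg_mul, mul_one, mul_assoc]
    rw [e1, e3] at e2
    rw [← e2]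
    rw [← mul_assoc W V (W*V), ← mul_assoc (W*V) W V, hWr, one_mul]
  -- final computation
  simp only [mul_sub, sub_mul, mul_add, add_mul, mul_one, one_mul, smul_mul_assoc,
    mul_smul_comm, smul_smul, Complex.I_mul_I, neg_smul, one_smul, neg_one_smul, neg_neg,
    smul_add, smul_sub, smul_neg, mul_assoc, hc1, hc2, hd1, hVR, hRV, hOVO]
  abel

lemma base_mul : !![(0 : ℝ), 1; -1, 0] * !![(0 : ℝ), 1; -1, 0] = -1 := by
  ext i j
  fin_cases i <;> fin_cases j <;> simp [Matrix.mul_apply, Fin.sum_univ_two, Matrix.one_apply]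

lemma base_transpose : (!![(0 : ℝ), 1; -1, 0])ᵀ = -(!![(0 : ℝ), 1; -1, 0]) := by
  ext i j
  fin_cases i <;> fin_cases j <;> simp

lemma omega_mul_omega (k : ℕ) : Omega k * Omega k = -1 := by
  rw [Omega, ← blockDiagonal_mul]
  simp only [base_mul]
  rw [show (fun _ : Fin k => (-1 : Matrix (Fin 2) (Fin 2) ℝ)) = -(fun _ : Fin k => (1 : Matrix (Fin 2) (Fin 2) ℝ)) from rfl,
    blockDiagonal_neg]
  rw [show (fun _ : Fin k => (1 : Matrix (Fin 2) (Fin 2) ℝ)) = (1 : Fin k → Matrix (Fin 2) (Fin 2) ℝ) from rfl, blockDiagonal_one]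

lemma omega_transpose (k : ℕ) : (Omega k)ᵀ = -(Omega k) := by
  rw [Omega, blockDiagonal_transpose]
  simp only [base_transpose]
  rw [show (fun _ : Fin k => -(!![(0:ℝ),1;-1,0])) = -(fun _ : Fin k => (!![(0:ℝ),1;-1,0])) from rfl,
    blockDiagonal_neg]

lemma omega_det (k : ℕ) : (Omega k).det = 1 := by
  rw [Omega, det_blockDiagonal]
  simp [Matrix.det_fin_two_of]

lemma aux_offdiag {ιa ιb : Type} [Fintype ιa] [Fintype ιb] [DecidableEq ιa] [DecidableEq ιb]
    {A : Matrix ιa ιa ℂ} {Xc : Matrix ιa ιb ℂ} {B : Matrix ιb ιb ℂ}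
    (hM : (fromBlocks A Xc Xcᵀ B).PosSemidef) {a : ιa → ℂ} (ha : A *ᵥ a = 0) :
    Xcᵀ *ᵥ a = 0 := by
  have hw : (fromBlocks A Xc Xcᵀ B) *ᵥ (Sum.elim a 0) = Sum.elim (0 : ιa → ℂ) (Xcᵀ *ᵥ a) := by
    rw [fromBlocks_mulVec]
    simp [ha]
  have hstar : star (Sum.elim a (0 : ιb → ℂ)) = Sum.elim (star a) 0 := by
    funext k; cases k <;> simp
  have hdot : star (Sum.elim a (0 : ιb → ℂ)) ⬝ᵥ ((fromBlocks A Xc Xcᵀ B) *ᵥ (Sum.elim a 0)) = 0 := by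
    rw [hw, hstar, sumElim_dotProduct_sumElim]
    simp
  have h0 := (hM.dotProduct_mulVec_zero_iff (Sum.elim a 0)).mp hdot
  rw [hw] at h0
  funext j
  exact congrFun h0 (Sum.inr j)

/-- **A pure reduction factorises a bipartite quantum covariance matrix.** If
`V_AB = [[V_A, X], [Xᵀ, V_B]]` is a bipartite QCM and the reduction `V_A` is pure
(`det V_A = 1`), then the off-diagonal block vanishes: `X = 0`. -/
theorem pure_reduction_factorises (nA nB : ℕ)
    (VA : Matrix (Fin 2 × Fin nA) (Fin 2 × Fin nA) ℝ)
    (VB : Matrix (Fin 2 × Fin nB) (Fin 2 × Fin nB) ℝ)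
    (X : Matrix (Fin 2 × Fin nA) (Fin 2 × Fin nB) ℝ)
    (hSym : (fromBlocks VA X Xᵀ VB).IsSymm)
    (hQCM : IsQCM (fromBlocks (Omega nA) 0 0 (Omega nB)) (fromBlocks VA X Xᵀ VB))
    (hpure : VA.det = 1) :
    X = 0 := by
  have hcoe : (fun x : ℝ => (x : ℂ)) = ⇑(Complex.ofRealHom) := rfl
  set f : ℝ →+* ℂ := Complex.ofRealHom with hf
  -- real symmetry of the blocks
  have hVAT : VAᵀ = VA := by
    ext i j
    have := congrFun (congrFun hSym (Sum.inl i)) (Sum.inl j)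
    simpa using this
  have hVBT : VBᵀ = VB := by
    ext i j
    have := congrFun (congrFun hSym (Sum.inr i)) (Sum.inr j)
    simpa using this
  -- complex matrices
  set Va : Matrix (Fin 2 × Fin nA) (Fin 2 × Fin nA) ℂ := VA.map f with hVa
  set Vb : Matrix (Fin 2 × Fin nB) (Fin 2 × Fin nB) ℂ := VB.map f with hVb
  set Oa : Matrix (Fin 2 × Fin nA) (Fin 2 × Fin nA) ℂ := (Omega nA).map f with hOa
  set Ob : Matrix (Fin 2 × Fin nB) (Fin 2 × Fin nB) ℂ := (Omega nB).map f with hOb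
  set Xc : Matrix (Fin 2 × Fin nA) (Fin 2 × Fin nB) ℂ := X.map f with hXc
  -- the full PSD matrix in block form
  have hQ : ((fromBlocks VA X Xᵀ VB).map (fun x => (x : ℂ))
      + Complex.I • (fromBlocks (Omega nA) 0 0 (Omega nB)).map (fun x => (x : ℂ))).PosSemidef := hQCM
  rw [hcoe] at hQ
  have hEq : (fromBlocks VA X Xᵀ VB).map ⇑f
      + Complex.I • (fromBlocks (Omega nA) 0 0 (Omega nB)).map ⇑f
      = fromBlocks (Va + Complex.I • Oa) Xc Xcᵀ (Vb + Complex.I • Ob) := by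
    rw [fromBlocks_map, fromBlocks_map, fromBlocks_smul, fromBlocks_add]
    rw [Matrix.map_zero _ (map_zero f), transpose_map]
    congr 1 <;> simp [hXc]
  rw [hEq] at hQ
  -- complex-level facts about Omega and the blocks
  have hOaT : Oaᵀ = -Oa := by
    rw [hOa, ← transpose_map, omega_transpose]
    ext i j; simp
  have hObT : Obᵀ = -Ob := by
    rw [hOb, ← transpose_map, omega_transpose]
    ext i j; simp
  have hmapH : ∀ {p : Type} [Fintype p] [DecidableEq p] (M : Matrix p p ℝ),
      (M.map ⇑f)ᴴ = Mᵀ.map ⇑f := by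
    intro p _ _ M
    ext i j
    simp only [Matrix.conjTranspose_apply, Matrix.map_apply, Matrix.transpose_apply]
    exact Complex.conj_ofReal _
  have hOaH : Oaᴴ = -Oa := by
    rw [hOa, hmapH, omega_transpose]
    ext i j; simp
  have hVaT : Vaᵀ = Va := by rw [hVa, ← transpose_map, hVAT]
  have hVaH : Vaᴴ = Va := by rw [hVa, hmapH, hVAT]
  have hVbT : Vbᵀ = Vb := by rw [hVb, ← transpose_map, hVBT]
  have hOa2 : Oa * Oa = -1 := by
    rw [hOa, ← Matrix.map_mul, omega_mul_omega]
    ext i j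
    simp [Matrix.one_apply]
  have hdetOa : Oa.det = 1 := by
    have h := (RingHom.map_det f (Omega nA)).symm
    rw [omega_det] at h; simp at h
    exact h
  have hdetVa : Va.det = 1 := by
    have h := (RingHom.map_det f VA).symm
    rw [hpure] at h; simp at h
    exact h
  -- PSD of the diagonal blocks
  have hp : (Va + Complex.I • Oa).PosSemidef := by
    have hsub := hQ.submatrix Sum.inl
    have hsubeq : (fromBlocks (Va + Complex.I • Oa) Xc Xcᵀ (Vb + Complex.I • Ob)).submatrix
        Sum.inl Sum.inl = Va + Complex.I • Oa := by
      ext i j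
      simp
    rwa [hsubeq] at hsub
  have hm : (Va - Complex.I • Oa).PosSemidef := by
    have h := hp.transpose
    have heq : (Va + Complex.I • Oa)ᵀ = Va - Complex.I • Oa := by
      rw [transpose_add, transpose_smul, hVaT, hOaT]
      simp [sub_eq_add_neg]
    rwa [heq] at h
  -- the key identity
  have hkey : (Va + Complex.I • Oa) * Va⁻¹ * (Va - Complex.I • Oa) = 0 :=
    aux_key Oa Va hOa2 hOaT hOaH hdetOa hVaT hVaH hdetVa hp hm
  have hIVa : IsUnit Va.det := by rw [hdetVa]; exact isUnit_one
  have hRVa : Va⁻¹ * Va = 1 := nonsing_inv_mul Va hIVa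
  have hRaH : (Va⁻¹)ᴴ = Va⁻¹ := by rw [conjTranspose_nonsing_inv, hVaH]
  have hApH : (Va + Complex.I • Oa)ᴴ = Va + Complex.I • Oa := by
    rw [conjTranspose_add, conjTranspose_smul, hVaH, hOaH]
    simp [Complex.star_def, Complex.conj_I]
  have hAmH : (Va - Complex.I • Oa)ᴴ = Va - Complex.I • Oa := by
    rw [conjTranspose_sub, conjTranspose_smul, hVaH, hOaH]
    simp [Complex.star_def, Complex.conj_I, sub_eq_add_neg]
  have hkey2 : (Va - Complex.I • Oa) * Va⁻¹ * (Va + Complex.I • Oa) = 0 := by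
    have h := congrArg Matrix.conjTranspose hkey
    rw [conjTranspose_mul, conjTranspose_mul, hApH, hAmH, hRaH, conjTranspose_zero] at h
    rw [mul_assoc]
    exact h
  -- transposed full matrix is PSD
  have hMT : (fromBlocks (Va - Complex.I • Oa) Xc Xcᵀ (Vb - Complex.I • Ob)).PosSemidef := by
    have h := hQ.transpose
    rw [fromBlocks_transpose, transpose_transpose] at h
    have hBp : (Vb + Complex.I • Ob)ᵀ = Vb - Complex.I • Ob := by
      rw [transpose_add, transpose_smul, hVbT, hObT]; simp [sub_eq_add_neg]
    have hAp : (Va + Complex.I • Oa)ᵀ = Va - Complex.I • Oa := by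
      rw [transpose_add, transpose_smul, hVaT, hOaT]; simp [sub_eq_add_neg]
    rwa [hBp, hAp] at h
  -- every vector is annihilated by Xcᵀ
  have hXv : ∀ a : (Fin 2 × Fin nA) → ℂ, Xcᵀ *ᵥ a = 0 := by
    intro a
    have h1 : (Va + Complex.I • Oa) *ᵥ (Va⁻¹ *ᵥ ((Va - Complex.I • Oa) *ᵥ a)) = 0 := by
      rw [mulVec_mulVec, mulVec_mulVec, hkey, zero_mulVec]
    have e1 := aux_offdiag hQ h1
    have h2 : (Va - Complex.I • Oa) *ᵥ (Va⁻¹ *ᵥ ((Va + Complex.I • Oa) *ᵥ a)) = 0 := by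
      rw [mulVec_mulVec, mulVec_mulVec, hkey2, zero_mulVec]
    have e2 := aux_offdiag hMT h2
    have hcomb : Va⁻¹ * (Va - Complex.I • Oa) + Va⁻¹ * (Va + Complex.I • Oa) = 1 + 1 := by
      rw [mul_sub, mul_add, hRVa]
      abel
    have hsum : Va⁻¹ *ᵥ ((Va - Complex.I • Oa) *ᵥ a) + Va⁻¹ *ᵥ ((Va + Complex.I • Oa) *ᵥ a)
        = a + a := by
      rw [mulVec_mulVec, mulVec_mulVec, ← add_mulVec, hcomb, add_mulVec, one_mulVec]
    have e3 : Xcᵀ *ᵥ a + Xcᵀ *ᵥ a = 0 := by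
      rw [← mulVec_add, ← hsum, mulVec_add, e1, e2, add_zero]
    funext j
    have hj := congrFun e3 j
    simp only [Pi.add_apply, Pi.zero_apply] at hj
    have := add_self_eq_zero.mp hj
    simpa using this
  -- conclude X = 0
  ext i j
  have h := congrFun (hXv (Pi.single i 1)) j
  simp only [Matrix.mulVec, dotProduct, Pi.single_apply, mul_ite, mul_one, mul_zero,
    Finset.sum_ite_eq', Finset.mem_univ, if_true, Matrix.transpose_apply, Pi.zero_apply] at h
  rw [hXc] at h
  simp only [Matrix.map_apply, hf, Complex.ofRealHom_eq_coe] at h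
  simp only [Matrix.zero_apply]
  exact_mod_cast h
end

section
/- Let ρ_1, …, ρ_n be density matrices on ℂ^d and (p_1, …, p_n) a probability distribution. Then the concavity gap of the von Neumann entropy is bounded below as follows: H(Σ_i p_i ρ_i) − Σ_i p_i H(ρ_i) ≥ Σ_i (−p_i ln p_i) − ln(1 + 2 Σ_{1 ≤ i < j ≤ n} √(p_i p_j) · Tr[√ρ_i √ρ_j]), where each overlap Tr[√ρ_i √ρ_j] is a nonnegative real number. In particular, since Tr[√ρ_i √ρ_j] ≤ F(ρ_i, ρ_j), the same lower bound holds with Tr[√ρ_i √ρ_j] replaced by the fidelity F(ρ_i, ρ_j). -/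
open Matrix ComplexOrder
open scoped Classical

/-- Von Neumann entropy `H(ρ) = Σ_i (−λ_i ln λ_i)` of a Hermitian matrix, via its
eigenvalues (junk value `0` on non-Hermitian matrices). -/
noncomputable def vN {ι : Type} [Fintype ι] [DecidableEq ι] (ρ : Matrix ι ι ℂ) : ℝ :=
  if h : ρ.IsHermitian then ∑ i, Real.negMulLog (h.eigenvalues i) else 0

/-- Positive semidefinite square root of a positive semidefinite matrix
(junk value `0` otherwise). -/
noncomputable def msqrt {ι : Type} [Fintype ι] [DecidableEq ι]
    (ρ : Matrix ι ι ℂ) : Matrix ι ι ℂ :=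
  if h : ρ.PosSemidef then
    (h.1.eigenvectorUnitary : Matrix ι ι ℂ) * diagonal ((↑) ∘ Real.sqrt ∘ h.1.eigenvalues) *
      (star h.1.eigenvectorUnitary : Matrix ι ι ℂ)
  else 0

/-- The fidelity `F(ρ,σ) = Tr √(√ρ σ √ρ)` of two (density) matrices. -/
noncomputable def fidelity {ι : Type} [Fintype ι] [DecidableEq ι]
    (ρ σ : Matrix ι ι ℂ) : ℝ :=
  ((msqrt (msqrt ρ * σ * msqrt ρ)).trace).re



variable {d : ℕ}

section Helpers

lemma psd_real_smul {M : Matrix (Fin d) (Fin d) ℂ} (hM : M.PosSemidef) {r : ℝ} (hr : 0 ≤ r) :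
    ((r : ℂ) • M).PosSemidef := by
  constructor
  · unfold Matrix.IsHermitian
    rw [conjTranspose_smul, hM.1.eq]
    congr 1
    simp [Complex.conj_ofReal]
  · intro x
    exact (hM.smul (by exact_mod_cast hr : (0:ℂ) ≤ (r:ℂ))).2 x

lemma trace_UDU_VEV (U V : Matrix (Fin d) (Fin d) ℂ) (f g : Fin d → ℝ) :
    (U * diagonal (RCLike.ofReal ∘ f) * star U *
      (V * diagonal (RCLike.ofReal ∘ g) * star V)).trace
    = ((∑ k, ∑ l, f k * g l * ‖(star U * V) k l‖ ^ 2 : ℝ) : ℂ) := by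
  have h1 : U * diagonal (RCLike.ofReal ∘ f) * star U *
      (V * diagonal (RCLike.ofReal ∘ g) * star V)
      = U * (diagonal (RCLike.ofReal ∘ f) * (star U * V) * diagonal (RCLike.ofReal ∘ g)
          * (star V)) := by
    noncomm_ring
  rw [h1, Matrix.trace_mul_comm]
  have h2 : diagonal (RCLike.ofReal ∘ f) * (star U * V) * diagonal (RCLike.ofReal ∘ g) * star V * U
      = diagonal (RCLike.ofReal ∘ f) * (star U * V) * diagonal (RCLike.ofReal ∘ g)
        * star (star U * V) := by
    rw [Matrix.star_mul, star_star]
    noncomm_ring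
  rw [h2]
  set W := star U * V with hW
  have entry : ∀ k l : Fin d,
      ((diagonal (RCLike.ofReal ∘ f) : Matrix (Fin d) (Fin d) ℂ) * W *
        (diagonal (RCLike.ofReal ∘ g) : Matrix (Fin d) (Fin d) ℂ)) k l
      = (f k : ℂ) * W k l * (g l : ℂ) := by
    intro k l
    rw [Matrix.mul_diagonal, Matrix.diagonal_mul]
    rfl
  rw [Matrix.trace]
  push_cast
  apply Finset.sum_congr rfl
  intro k _
  rw [Matrix.diag, Matrix.mul_apply]
  apply Finset.sum_congr rfl
  intro l _
  rw [entry, Matrix.star_apply]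
  have : (W k l) * (starRingEnd ℂ) (W k l) = ((‖W k l‖ : ℂ))^2 := Complex.mul_conj' (W k l)
  calc (f k : ℂ) * W k l * (g l) * (starRingEnd ℂ) (W k l)
      = (f k : ℂ) * (g l) * ((W k l) * (starRingEnd ℂ) (W k l)) := by ring
    _ = (f k : ℂ) * (g l) * ((‖W k l‖:ℂ))^2 := by rw [this]

lemma trace_eq_sum_eig {X : Matrix (Fin d) (Fin d) ℂ} (hX : X.IsHermitian) :
    X.trace = ((∑ k, hX.eigenvalues k : ℝ) : ℂ) := by
  conv_lhs => rw [hX.spectral_theorem, Unitary.conjStarAlgAut_apply]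
  rw [Matrix.trace_mul_cycle,
    (Matrix.mem_unitaryGroup_iff'.mp (Matrix.IsHermitian.eigenvectorUnitary hX).2), one_mul,
    Matrix.trace_diagonal]
  push_cast
  rfl

noncomputable def Matrix.PosSemidef.sqrt {ι : Type} [Fintype ι] [DecidableEq ι]
    {ρ : Matrix ι ι ℂ} (h : ρ.PosSemidef) : Matrix ι ι ℂ :=
  (h.1.eigenvectorUnitary : Matrix ι ι ℂ) * diagonal ((↑) ∘ Real.sqrt ∘ h.1.eigenvalues) *
    (star h.1.eigenvectorUnitary : Matrix ι ι ℂ)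

lemma sqrt_spec {X : Matrix (Fin d) (Fin d) ℂ} (hX : X.PosSemidef) :
    hX.sqrt = (Matrix.IsHermitian.eigenvectorUnitary hX.1 : Matrix (Fin d) (Fin d) ℂ) *
      diagonal (RCLike.ofReal ∘ (Real.sqrt ∘ hX.1.eigenvalues)) *
      star (Matrix.IsHermitian.eigenvectorUnitary hX.1 : Matrix (Fin d) (Fin d) ℂ) := rfl

lemma Matrix.PosSemidef.sqrt_mul_self {X : Matrix (Fin d) (Fin d) ℂ} (hX : X.PosSemidef) :
    hX.sqrt * hX.sqrt = X := by
  rw [sqrt_spec hX]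
  conv_rhs => rw [hX.1.spectral_theorem, Unitary.conjStarAlgAut_apply]
  have hu : star (hX.1.eigenvectorUnitary : Matrix (Fin d) (Fin d) ℂ) *
      (hX.1.eigenvectorUnitary : Matrix (Fin d) (Fin d) ℂ) = 1 :=
    Matrix.mem_unitaryGroup_iff'.mp hX.1.eigenvectorUnitary.2
  have hd : (diagonal (RCLike.ofReal ∘ (Real.sqrt ∘ hX.1.eigenvalues)) : Matrix (Fin d) (Fin d) ℂ) *
      (diagonal (RCLike.ofReal ∘ (Real.sqrt ∘ hX.1.eigenvalues)) : Matrix (Fin d) (Fin d) ℂ)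
      = (diagonal (RCLike.ofReal ∘ hX.1.eigenvalues) : Matrix (Fin d) (Fin d) ℂ) := by
    rw [diagonal_mul_diagonal]
    congr 1
    funext k
    simp only [Function.comp_apply]
    rw [← RCLike.ofReal_mul, Real.mul_self_sqrt (hX.eigenvalues_nonneg k)]
  calc _ = (hX.1.eigenvectorUnitary : Matrix (Fin d) (Fin d) ℂ) *
        (diagonal (RCLike.ofReal ∘ (Real.sqrt ∘ hX.1.eigenvalues)) : Matrix (Fin d) (Fin d) ℂ) *
        (star (hX.1.eigenvectorUnitary : Matrix (Fin d) (Fin d) ℂ) *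
          (hX.1.eigenvectorUnitary : Matrix (Fin d) (Fin d) ℂ)) *
        (diagonal (RCLike.ofReal ∘ (Real.sqrt ∘ hX.1.eigenvalues)) : Matrix (Fin d) (Fin d) ℂ) *
        star (hX.1.eigenvectorUnitary : Matrix (Fin d) (Fin d) ℂ) := by noncomm_ring
    _ = _ := by rw [hu, mul_one, Matrix.mul_assoc _ (diagonal _) (diagonal _), hd]

lemma Matrix.PosSemidef.posSemidef_sqrt {X : Matrix (Fin d) (Fin d) ℂ} (hX : X.PosSemidef) :
    hX.sqrt.PosSemidef := by
  have hD : (diagonal (RCLike.ofReal ∘ (Real.sqrt ∘ hX.1.eigenvalues)) :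
      Matrix (Fin d) (Fin d) ℂ).PosSemidef :=
    Matrix.posSemidef_diagonal_iff.mpr fun k => by simp [Real.sqrt_nonneg]
  have := hD.mul_mul_conjTranspose_same (hX.1.eigenvectorUnitary : Matrix (Fin d) (Fin d) ℂ)
  rw [sqrt_spec hX]
  exact this

lemma row_norm_one {W : Matrix (Fin d) (Fin d) ℂ} (hW : W * star W = 1) (k : Fin d) :
    ∑ l, ‖W k l‖ ^ 2 = 1 := by
  have h := congrArg (fun M : Matrix (Fin d) (Fin d) ℂ => M k k) hW
  simp only [Matrix.mul_apply, Matrix.star_apply, Matrix.one_apply_eq] at h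
  have h2 : ∀ l : Fin d, W k l * star (W k l) = ((‖W k l‖ ^ 2 : ℝ) : ℂ) := by
    intro l
    rw [show star (W k l) = (starRingEnd ℂ) (W k l) from rfl, Complex.mul_conj']
    push_cast; ring
  rw [Finset.sum_congr rfl (fun l _ => h2 l)] at h
  exact_mod_cast h

lemma col_norm {Z : Matrix (Fin d) (Fin d) ℂ} {D : Fin d → ℝ}
    (hZ : star Z * Z = diagonal (RCLike.ofReal ∘ D)) (l : Fin d) :
    ∑ a, ‖Z a l‖ ^ 2 = D l := by
  have h := congrArg (fun M : Matrix (Fin d) (Fin d) ℂ => M l l) hZ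
  simp only [Matrix.mul_apply, Matrix.star_apply, Matrix.diagonal_apply_eq,
    Function.comp_apply] at h
  have h2 : ∀ a : Fin d, star (Z a l) * Z a l = ((‖Z a l‖ ^ 2 : ℝ) : ℂ) := by
    intro a
    rw [mul_comm, show star (Z a l) = (starRingEnd ℂ) (Z a l) from rfl, Complex.mul_conj']
    push_cast; ring
  rw [Finset.sum_congr rfl (fun a _ => h2 a)] at h
  have h4 : ((∑ a, ‖Z a l‖ ^ 2 : ℝ) : ℂ) = ((D l : ℝ) : ℂ) := by
    push_cast
    convert h using 2 with a
    push_cast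
    ring
    rfl
  exact_mod_cast h4

lemma jensen_log {J : Type*} [Fintype J] (w y : J → ℝ)
    (hw : ∀ j, 0 ≤ w j) (h1 : ∑ j, w j = 1) (hy : ∀ j, w j ≠ 0 → 0 < y j) :
    ∑ j, w j * Real.log (y j) ≤ Real.log (∑ j, w j * y j) := by
  classical
  set t := Finset.univ.filter (fun j => w j ≠ 0) with ht
  have e1 : ∑ j, w j * Real.log (y j) = ∑ j ∈ t, w j * Real.log (y j) := by
    rw [ht]
    rw [Finset.sum_filter_of_ne]
    intro x _ hx
    intro hwx
    exact hx (by rw [hwx, zero_mul])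
  have e2 : ∑ j, w j * y j = ∑ j ∈ t, w j * y j := by
    rw [ht, Finset.sum_filter_of_ne]
    intro x _ hx hwx
    exact hx (by rw [hwx, zero_mul])
  have e3 : ∑ j ∈ t, w j = 1 := by
    rw [← h1, ht, Finset.sum_filter_of_ne]
    intro x _ hx hwx
    exact hx hwx
  rw [e1, e2]
  have := (strictConcaveOn_log_Ioi.concaveOn).le_map_sum
    (t := t) (w := w) (p := y)
    (fun j _ => hw j) e3
    (fun j hj => hy j (by simpa [ht] using hj))
  simpa using this

lemma sum_sym {n : ℕ} (f : Fin n → Fin n → ℝ) (hsym : ∀ i j, f i j = f j i) :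
    ∑ i, ∑ j, f i j = (∑ i, f i i) + 2 * ∑ i, ∑ j, (if i < j then f i j else 0) := by
  have point : ∀ i j : Fin n, f i j =
      (if i < j then f i j else 0) + (if i = j then f i j else 0) + (if j < i then f i j else 0) := by
    intro i j
    rcases lt_trichotomy i j with h | h | h
    · simp [h, h.ne, asymm h]
    · simp [h, lt_irrefl]
    · simp [h, h.ne', asymm h, (ne_of_lt h).symm]
  calc ∑ i, ∑ j, f i j
      = ∑ i, ∑ j, ((if i < j then f i j else 0) + (if i = j then f i j else 0)
          + (if j < i then f i j else 0)) := by
        exact Finset.sum_congr rfl fun i _ => Finset.sum_congr rfl fun j _ => point i j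
    _ = (∑ i, ∑ j, (if i < j then f i j else 0)) + (∑ i, ∑ j, (if i = j then f i j else 0))
          + ∑ i, ∑ j, (if j < i then f i j else 0) := by
        simp [Finset.sum_add_distrib]
    _ = (∑ i, f i i) + 2 * ∑ i, ∑ j, (if i < j then f i j else 0) := by
        have hdiag : ∀ i : Fin n, ∑ j, (if i = j then f i j else 0) = f i i := by
          intro i; simp
        have hswap : ∑ i, ∑ j, (if j < i then f i j else 0)
            = ∑ i, ∑ j, (if i < j then f i j else 0) := by
          rw [Finset.sum_comm]
          exact Finset.sum_congr rfl fun j _ => Finset.sum_congr rfl fun i _ => by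
            by_cases h : j < i <;> simp [h, hsym]
        rw [hswap, Finset.sum_congr rfl fun i _ => hdiag i]
        ring

lemma trace_re_expand {X Y : Matrix (Fin d) (Fin d) ℂ} (hY : Y.IsHermitian) :
    ((X * Y).trace).re
      = ∑ a, ∑ b, ((X a b).re * (Y a b).re + (X a b).im * (Y a b).im) := by
  have : (X * Y).trace = ∑ a, ∑ b, X a b * Y b a := by
    rw [Matrix.trace]
    exact Finset.sum_congr rfl fun a _ => by rw [Matrix.diag, Matrix.mul_apply]
  rw [this]
  rw [Complex.re_sum]
  refine Finset.sum_congr rfl fun a _ => ?_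
  rw [Complex.re_sum]
  refine Finset.sum_congr rfl fun b _ => ?_
  have hba : Y b a = star (Y a b) := (hY.apply b a).symm
  rw [hba]
  simp [Complex.mul_re, Complex.star_def]

lemma cs_trace {A B : Matrix (Fin d) (Fin d) ℂ} (hA : A.IsHermitian) (hB : B.IsHermitian) :
    (((A * B).trace).re) ^ 2 ≤ ((A * A).trace).re * ((B * B).trace).re := by
  classical
  have key : ∀ (X Y : Matrix (Fin d) (Fin d) ℂ), Y.IsHermitian →
      ((X * Y).trace).re = ∑ j : (Fin d × Fin d) ⊕ (Fin d × Fin d),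
        (Sum.elim (fun ab : Fin d × Fin d => (X ab.1 ab.2).re)
          (fun ab => (X ab.1 ab.2).im) j) *
        (Sum.elim (fun ab : Fin d × Fin d => (Y ab.1 ab.2).re)
          (fun ab => (Y ab.1 ab.2).im) j) := by
    intro X Y hY
    rw [trace_re_expand hY, Fintype.sum_sum_type]
    simp only [Sum.elim_inl, Sum.elim_inr]
    rw [← Finset.sum_add_distrib, Fintype.sum_prod_type]
  set f : (Fin d × Fin d) ⊕ (Fin d × Fin d) → ℝ :=
    Sum.elim (fun ab : Fin d × Fin d => (A ab.1 ab.2).re)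
      (fun ab : Fin d × Fin d => (A ab.1 ab.2).im) with hf
  set g : (Fin d × Fin d) ⊕ (Fin d × Fin d) → ℝ :=
    Sum.elim (fun ab : Fin d × Fin d => (B ab.1 ab.2).re)
      (fun ab : Fin d × Fin d => (B ab.1 ab.2).im) with hg
  rw [key A B hB, key A A hA, key B B hB]
  have hcs := Finset.sum_mul_sq_le_sq_mul_sq Finset.univ f g
  have e : ∀ h : (Fin d × Fin d) ⊕ (Fin d × Fin d) → ℝ,
      ∑ j, h j ^ 2 = ∑ j, h j * h j := by intro h; simp [sq]
  rw [e f, e g] at hcs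
  exact hcs

lemma trace_sqrt_psd {M : Matrix (Fin d) (Fin d) ℂ} (hM : M.PosSemidef) :
    (hM.sqrt).trace = ((∑ l, Real.sqrt (hM.1.eigenvalues l) : ℝ) : ℂ) := by
  show ((Matrix.IsHermitian.eigenvectorUnitary hM.1 : Matrix (Fin d) (Fin d) ℂ) *
      diagonal (RCLike.ofReal ∘ (Real.sqrt ∘ hM.1.eigenvalues)) *
      star (Matrix.IsHermitian.eigenvectorUnitary hM.1 : Matrix (Fin d) (Fin d) ℂ)).trace = _
  rw [Matrix.trace_mul_cycle,
    Matrix.mem_unitaryGroup_iff'.mp (Matrix.IsHermitian.eigenvectorUnitary hM.1).2, one_mul,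
    Matrix.trace_diagonal]
  push_cast
  rfl

lemma overlap_le_tr_sqrt {X Y : Matrix (Fin d) (Fin d) ℂ}
    (hX : X.PosSemidef) (hY : Y.PosSemidef) (hM : (hX.sqrt * Y * hX.sqrt).PosSemidef) :
    ((hX.sqrt * hY.sqrt).trace).re ≤ ((hM.sqrt).trace).re := by
  set V : Matrix (Fin d) (Fin d) ℂ :=
    (Matrix.IsHermitian.eigenvectorUnitary hM.1 : Matrix (Fin d) (Fin d) ℂ) with hV
  set m := hM.1.eigenvalues with hm
  set N : Matrix (Fin d) (Fin d) ℂ := hY.sqrt * hX.sqrt with hN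
  have hVu : star V * V = 1 :=
    Matrix.mem_unitaryGroup_iff'.mp (Matrix.IsHermitian.eigenvectorUnitary hM.1).2
  have hVu' : V * star V = 1 :=
    Matrix.mem_unitaryGroup_iff.mp (Matrix.IsHermitian.eigenvectorUnitary hM.1).2
  have hNN : star N * N = hX.sqrt * Y * hX.sqrt := by
    rw [hN, Matrix.star_mul, Matrix.star_eq_conjTranspose, Matrix.star_eq_conjTranspose,
      hX.posSemidef_sqrt.1.eq, hY.posSemidef_sqrt.1.eq]
    calc hX.sqrt * hY.sqrt * (hY.sqrt * hX.sqrt)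
        = hX.sqrt * (hY.sqrt * hY.sqrt) * hX.sqrt := by noncomm_ring
      _ = hX.sqrt * Y * hX.sqrt := by rw [hY.sqrt_mul_self]
  have hdiag : star (N * V) * (N * V) = diagonal (RCLike.ofReal ∘ m) := by
    rw [Matrix.star_mul]
    calc star V * star N * (N * V) = star V * (star N * N) * V := by noncomm_ring
      _ = star V * (hX.sqrt * Y * hX.sqrt) * V := by rw [hNN]
      _ = diagonal (RCLike.ofReal ∘ m) := by
        have := hM.1.conjStarAlgAut_star_eigenvectorUnitary
        rw [Unitary.conjStarAlgAut_star_apply] at this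
        exact this
  have htr : (hX.sqrt * hY.sqrt).trace = (star V * N * V).trace := by
    rw [Matrix.trace_mul_comm, ← hN]
    rw [Matrix.trace_mul_cycle (star V) N V, ← Matrix.mul_assoc, hVu', one_mul]
  rw [htr, trace_sqrt_psd hM]
  have hre : ((star V * N * V).trace).re = ∑ l, ((star V * N * V) l l).re := by
    rw [Matrix.trace]
    exact Complex.re_sum _ _
  rw [hre, Complex.ofReal_re]
  apply Finset.sum_le_sum
  intro l _
  have hentry : (star V * N * V) l l = ∑ a, star (V a l) * (N * V) a l := by
    rw [Matrix.mul_assoc, Matrix.mul_apply]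
    exact Finset.sum_congr rfl fun a _ => by rw [Matrix.star_apply]
  have hZcol : ∑ a, ‖(N * V) a l‖ ^ 2 = m l := col_norm hdiag l
  have hVcol : ∑ a, ‖V a l‖ ^ 2 = 1 := by
    have h := row_norm_one (W := star V) (by rw [star_star, hVu]) l
    calc ∑ a, ‖V a l‖ ^ 2 = ∑ a, ‖(star V) l a‖ ^ 2 := by
          refine Finset.sum_congr rfl fun a _ => ?_
          rw [Matrix.star_apply, norm_star]
      _ = 1 := h
  calc ((star V * N * V) l l).re ≤ ‖(star V * N * V) l l‖ :=
        Complex.re_le_norm _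
    _ = ‖∑ a, star (V a l) * (N * V) a l‖ := by rw [hentry]
    _ ≤ ∑ a, ‖V a l‖ * ‖(N * V) a l‖ := by
        refine (norm_sum_le _ _).trans (le_of_eq ?_)
        refine Finset.sum_congr rfl fun a _ => ?_
        rw [norm_mul, norm_star]
    _ ≤ Real.sqrt (m l) := by
        have hcs := Finset.sum_mul_sq_le_sq_mul_sq Finset.univ
          (fun a => ‖V a l‖) (fun a => ‖(N * V) a l‖)
        rw [hVcol, hZcol, one_mul] at hcs
        have hnn : 0 ≤ ∑ a, ‖V a l‖ * ‖(N * V) a l‖ :=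
          Finset.sum_nonneg fun a _ => mul_nonneg (norm_nonneg _) (norm_nonneg _)
        calc ∑ a, ‖V a l‖ * ‖(N * V) a l‖
            = Real.sqrt ((∑ a, ‖V a l‖ * ‖(N * V) a l‖) ^ 2) := (Real.sqrt_sq hnn).symm
          _ ≤ Real.sqrt (m l) := Real.sqrt_le_sqrt hcs

lemma trace_sqrt_mul_sqrt {X Y : Matrix (Fin d) (Fin d) ℂ}
    (hX : X.PosSemidef) (hY : Y.PosSemidef) :
    (hX.sqrt * hY.sqrt).trace
      = ((∑ k, ∑ l, Real.sqrt (hX.1.eigenvalues k) * Real.sqrt (hY.1.eigenvalues l) *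
          ‖((star (Matrix.IsHermitian.eigenvectorUnitary hX.1 : Matrix (Fin d) (Fin d) ℂ)) *
            (Matrix.IsHermitian.eigenvectorUnitary hY.1 : Matrix (Fin d) (Fin d) ℂ)) k l‖ ^ 2
          : ℝ) : ℂ) := by
  rw [sqrt_spec hX, sqrt_spec hY, trace_UDU_VEV]
  rfl

end Helpers

/-- **Lower bound on the concavity gap of the von Neumann entropy.** For density
matrices `ρ_1, …, ρ_n` and a probability distribution `(p_i)`:
`H(Σ p_i ρ_i) − Σ p_i H(ρ_i) ≥ Σ (−p_i ln p_i) − ln(1 + 2 Σ_{i<j} √(p_i p_j) Tr[√ρ_i √ρ_j])`,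
each overlap `Tr[√ρ_i √ρ_j]` being a nonnegative real number; and the same bound holds
with `Tr[√ρ_i √ρ_j]` replaced by the fidelity `F(ρ_i, ρ_j)`. -/
theorem vN_concavity_lower_bound (n d : ℕ)
    (ρ : Fin n → Matrix (Fin d) (Fin d) ℂ) (p : Fin n → ℝ)
    (hρ : ∀ i, (ρ i).PosSemidef) (hρtr : ∀ i, (ρ i).trace = 1)
    (hp : ∀ i, 0 ≤ p i) (hp1 : ∑ i, p i = 1) :
    (∀ i j, 0 ≤ ((msqrt (ρ i) * msqrt (ρ j)).trace).re)
    ∧ vN (∑ i, p i • ρ i) - ∑ i, p i * vN (ρ i)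
        ≥ (∑ i, Real.negMulLog (p i)) -
          Real.log (1 + 2 * ∑ i, ∑ j, if i < j then
            Real.sqrt (p i * p j) * ((msqrt (ρ i) * msqrt (ρ j)).trace).re else 0)
    ∧ vN (∑ i, p i • ρ i) - ∑ i, p i * vN (ρ i)
        ≥ (∑ i, Real.negMulLog (p i)) -
          Real.log (1 + 2 * ∑ i, ∑ j, if i < j then
            Real.sqrt (p i * p j) * fidelity (ρ i) (ρ j) else 0) := by
    classical
  have hmsqrt : ∀ i, msqrt (ρ i) = (hρ i).sqrt := fun i => dif_pos (hρ i)
  -- σ and its PSD structure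
  have hσrw : (∑ i, p i • ρ i) = ∑ i, ((p i : ℂ) • ρ i) := by
    refine Finset.sum_congr rfl fun i _ => ?_
    ext a b
    simp [Complex.real_smul]
  have hσ : (∑ i, p i • ρ i).PosSemidef := by
    rw [hσrw]
    refine Finset.sum_induction _ _ (fun a b ha hb => ha.add hb) Matrix.PosSemidef.zero ?_
    exact fun i _ => psd_real_smul (hρ i) (hp i)
  set σ : Matrix (Fin d) (Fin d) ℂ := ∑ i, p i • ρ i with hσdef
  -- eigen-data
  set V : Matrix (Fin d) (Fin d) ℂ :=
    (Matrix.IsHermitian.eigenvectorUnitary hσ.1 : Matrix (Fin d) (Fin d) ℂ) with hV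
  set μ : Fin d → ℝ := hσ.1.eigenvalues with hμ
  set U : Fin n → Matrix (Fin d) (Fin d) ℂ :=
    fun i => (Matrix.IsHermitian.eigenvectorUnitary (hρ i).1 : Matrix (Fin d) (Fin d) ℂ) with hU
  set lam : Fin n → Fin d → ℝ := fun i => (hρ i).1.eigenvalues with hlam
  set c : Fin n → Fin d → Fin d → ℝ := fun i k l => ‖((star (U i)) * V) k l‖ ^ 2 with hc
  have hμ0 : ∀ l, 0 ≤ μ l := fun l => hσ.eigenvalues_nonneg l
  have hlam0 : ∀ i k, 0 ≤ lam i k := fun i k => (hρ i).eigenvalues_nonneg k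
  have hc0 : ∀ i k l, 0 ≤ c i k l := fun i k l => sq_nonneg _
  have hlamsum : ∀ i, ∑ k, lam i k = 1 := by
    intro i
    have h := trace_eq_sum_eig (hρ i).1
    rw [hρtr i] at h
    exact_mod_cast h.symm
  have hbody : (∑ i, p i • ρ i : Matrix (Fin d) (Fin d) ℂ) = ∑ i, ((p i : ℂ) • ρ i) := by
    rw [← hσdef]; exact hσrw
  have hσtr : σ.trace = 1 := by
    rw [hσdef, hbody, Matrix.trace_sum]
    have : ∀ i : Fin n, (((p i : ℂ)) • ρ i).trace = (p i : ℂ) := by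
      intro i; rw [Matrix.trace_smul, hρtr i, smul_eq_mul, mul_one]
    rw [Finset.sum_congr rfl fun i _ => this i]
    rw [← Complex.ofReal_sum, hp1, Complex.ofReal_one]
  have hμsum : ∑ l, μ l = 1 := by
    have h := trace_eq_sum_eig hσ.1
    rw [hσtr] at h
    exact_mod_cast h.symm
  -- unitarity of overlap matrices
  have hVu : star V * V = 1 :=
    Matrix.mem_unitaryGroup_iff'.mp (Matrix.IsHermitian.eigenvectorUnitary hσ.1).2
  have hVu' : V * star V = 1 :=
    Matrix.mem_unitaryGroup_iff.mp (Matrix.IsHermitian.eigenvectorUnitary hσ.1).2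
  have hUu : ∀ i, star (U i) * (U i) = 1 := fun i =>
    Matrix.mem_unitaryGroup_iff'.mp (Matrix.IsHermitian.eigenvectorUnitary (hρ i).1).2
  have hUu' : ∀ i, (U i) * star (U i) = 1 := fun i =>
    Matrix.mem_unitaryGroup_iff.mp (Matrix.IsHermitian.eigenvectorUnitary (hρ i).1).2
  have hWrow : ∀ i k, ∑ l, c i k l = 1 := by
    intro i k
    refine row_norm_one ?_ k
    rw [Matrix.star_mul, star_star]
    calc star (U i) * V * (star V * U i) = star (U i) * (V * star V) * U i := by noncomm_ring
      _ = star (U i) * U i := by rw [hVu', mul_one]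
      _ = 1 := hUu i
  have hWcol : ∀ i l, ∑ k, c i k l = 1 := by
    intro i l
    have hW' : (star (star (U i) * V)) * star (star (star (U i) * V)) = 1 := by
      rw [star_star, Matrix.star_mul, star_star]
      calc star V * U i * (star (U i) * V) = star V * (U i * star (U i)) * V := by noncomm_ring
        _ = star V * V := by rw [hUu' i, mul_one]
        _ = 1 := hVu
    have h := row_norm_one hW' l
    calc ∑ k, c i k l = ∑ k, ‖(star (star (U i) * V)) l k‖ ^ 2 := by
          refine Finset.sum_congr rfl fun k _ => ?_
          rw [hc, Matrix.star_apply, norm_star]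
      _ = 1 := h
  -- decomposition of μ
  have hVfold : (Matrix.IsHermitian.eigenvectorUnitary hσ.1 : Matrix (Fin d) (Fin d) ℂ) = V :=
    rfl
  have hUfold : ∀ i, (Matrix.IsHermitian.eigenvectorUnitary (hρ i).1 :
      Matrix (Fin d) (Fin d) ℂ) = U i := fun i => rfl
  have hμdec : ∀ l, μ l = ∑ i, p i * ∑ k, lam i k * c i k l := by
    intro l
    have he : ∀ l' : Fin d, ((fun l' : Fin d => if l' = l then (1:ℝ) else 0) l') = _ := fun _ => rfl
    set P : Matrix (Fin d) (Fin d) ℂ :=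
      V * diagonal (RCLike.ofReal ∘ (fun l' : Fin d => if l' = l then (1:ℝ) else 0)) * star V
      with hPdef
    have hρP : ∀ i, (ρ i * P).trace = ((∑ k, lam i k * c i k l : ℝ) : ℂ) := by
      intro i
      conv_lhs => rw [(hρ i).1.spectral_theorem, Unitary.conjStarAlgAut_apply]
      rw [hPdef, hUfold i, trace_UDU_VEV]
      congr 1
      refine Finset.sum_congr rfl fun k _ => ?_
      rw [Finset.sum_eq_single l]
      · simp [hc, hlam]
      · intro b _ hb; simp [hb]
      · intro hl; exact absurd (Finset.mem_univ l) hl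
    have hσP : (σ * P).trace = ((μ l : ℝ) : ℂ) := by
      conv_lhs => rw [hσ.1.spectral_theorem, Unitary.conjStarAlgAut_apply]
      rw [hPdef, hVfold, trace_UDU_VEV, hVu]
      have : ∀ k l' : Fin d, ‖(1 : Matrix (Fin d) (Fin d) ℂ) k l'‖ ^ 2
          = if k = l' then (1:ℝ) else 0 := by
        intro k l'
        by_cases h : k = l' <;> simp [Matrix.one_apply, h]
      congr 1
      calc ∑ k, ∑ l', hσ.1.eigenvalues k * (if l' = l then (1:ℝ) else 0) *
            ‖(1 : Matrix (Fin d) (Fin d) ℂ) k l'‖ ^ 2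
          = ∑ k, ∑ l', hσ.1.eigenvalues k * (if l' = l then (1:ℝ) else 0) *
            (if k = l' then (1:ℝ) else 0) := by
            exact Finset.sum_congr rfl fun k _ => Finset.sum_congr rfl fun l' _ => by
              rw [this k l']
        _ = μ l := by
            rw [hμ]
            simp [mul_ite, mul_one, mul_zero, ite_mul, zero_mul, Finset.sum_ite_eq,
              Finset.sum_ite_eq']
    have hlin : (σ * P).trace = ∑ i, (p i : ℂ) * (ρ i * P).trace := by
      conv_lhs => rw [hσdef, hbody]
      rw [Finset.sum_mul, Matrix.trace_sum]
      exact Finset.sum_congr rfl fun i _ => by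
        rw [smul_mul_assoc, Matrix.trace_smul, smul_eq_mul]
    rw [hσP] at hlin
    rw [Finset.sum_congr rfl fun i _ => by rw [hρP i]] at hlin
    have : ((μ l : ℝ) : ℂ) = ((∑ i, p i * ∑ k, lam i k * c i k l : ℝ) : ℂ) := by
      rw [hlin]; push_cast; rfl
    exact_mod_cast this
  -- abbreviations
  set ν : Fin n → Fin d → ℝ := fun i k => p i * lam i k with hν
  set w : Fin n × Fin d × Fin d → ℝ := fun j => c j.1 j.2.1 j.2.2 * ν j.1 j.2.1 with hwdef
  set y : Fin n × Fin d × Fin d → ℝ := fun j => Real.sqrt (μ j.2.2 / ν j.1 j.2.1) with hydef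
  have hν0 : ∀ i k, 0 ≤ ν i k := fun i k => mul_nonneg (hp i) (hlam0 i k)
  have hw0 : ∀ j, 0 ≤ w j := fun j => mul_nonneg (hc0 _ _ _) (hν0 _ _)
  have hy0 : ∀ j, 0 ≤ y j := fun j => Real.sqrt_nonneg _
  have hνsum : ∀ i, ∑ k, ν i k = p i := by
    intro i
    rw [hν, ← Finset.mul_sum, hlamsum i, mul_one]
  have hwsum : ∑ j, w j = 1 := by
    rw [Fintype.sum_prod_type]
    refine Eq.trans (Finset.sum_congr rfl fun i _ => ?_) hp1
    rw [Fintype.sum_prod_type]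
    refine Eq.trans (Finset.sum_congr rfl fun k _ => ?_) (hνsum i)
    show ∑ l, c i k l * ν i k = ν i k
    rw [← Finset.sum_mul, hWrow i k, one_mul]
  have hμlb : ∀ i k l, ν i k * c i k l ≤ μ l := by
    intro i k l
    rw [hμdec l]
    have h1 : ν i k * c i k l = p i * (lam i k * c i k l) := by rw [hν]; ring
    have h2 : lam i k * c i k l ≤ ∑ k', lam i k' * c i k' l :=
      Finset.single_le_sum (f := fun k' => lam i k' * c i k' l)
        (fun k' _ => mul_nonneg (hlam0 i k') (hc0 i k' l)) (Finset.mem_univ k)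
    have h3 : p i * (lam i k * c i k l) ≤ p i * ∑ k', lam i k' * c i k' l :=
      mul_le_mul_of_nonneg_left h2 (hp i)
    have h4 : p i * ∑ k', lam i k' * c i k' l ≤ ∑ i', p i' * ∑ k', lam i' k' * c i' k' l :=
      Finset.single_le_sum (f := fun i' => p i' * ∑ k', lam i' k' * c i' k' l)
        (fun i' _ => mul_nonneg (hp i') (Finset.sum_nonneg fun k' _ =>
          mul_nonneg (hlam0 i' k') (hc0 i' k' l))) (Finset.mem_univ i)
    linarith
  have hypos : ∀ j, w j ≠ 0 → 0 < y j := by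
    intro j hj
    have hcj : c j.1 j.2.1 j.2.2 ≠ 0 := fun h => hj (by rw [hwdef]; simp [h])
    have hνj : ν j.1 j.2.1 ≠ 0 := fun h => hj (by rw [hwdef]; simp [h])
    have hνpos : 0 < ν j.1 j.2.1 := lt_of_le_of_ne (hν0 _ _) (Ne.symm hνj)
    have hcpos : 0 < c j.1 j.2.1 j.2.2 := lt_of_le_of_ne (hc0 _ _ _) (Ne.symm hcj)
    have hμpos : 0 < μ j.2.2 := lt_of_lt_of_le (mul_pos hνpos hcpos) (hμlb j.1 j.2.1 j.2.2)
    rw [hydef]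
    exact Real.sqrt_pos.mpr (div_pos hμpos hνpos)
  -- the entropy difference identity
  have Sid : ∑ l, Real.negMulLog (μ l) - ∑ i, ∑ k, Real.negMulLog (ν i k)
      = ∑ j, w j * (Real.log (ν j.1 j.2.1) - Real.log (μ j.2.2)) := by
    have e1 : ∑ j, w j * Real.log (ν j.1 j.2.1) = ∑ i, ∑ k, ν i k * Real.log (ν i k) := by
      rw [Fintype.sum_prod_type]
      refine Finset.sum_congr rfl fun i _ => ?_
      rw [Fintype.sum_prod_type]
      refine Finset.sum_congr rfl fun k _ => ?_
      show ∑ l, c i k l * ν i k * Real.log (ν i k) = ν i k * Real.log (ν i k)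
      rw [← Finset.sum_mul, ← Finset.sum_mul, hWrow i k, one_mul]
    have e2 : ∑ j, w j * Real.log (μ j.2.2) = ∑ l, μ l * Real.log (μ l) := by
      calc ∑ j, w j * Real.log (μ j.2.2)
          = ∑ i, ∑ k, ∑ l, c i k l * ν i k * Real.log (μ l) := by
            rw [Fintype.sum_prod_type]
            refine Finset.sum_congr rfl fun i _ => ?_
            rw [Fintype.sum_prod_type]
        _ = ∑ l, ∑ i, ∑ k, c i k l * ν i k * Real.log (μ l) := by
            rw [show (∑ i, ∑ k, ∑ l, c i k l * ν i k * Real.log (μ l))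
                = ∑ i, ∑ l, ∑ k, c i k l * ν i k * Real.log (μ l)
              from Finset.sum_congr rfl fun i _ => Finset.sum_comm]
            exact Finset.sum_comm
        _ = ∑ l, μ l * Real.log (μ l) := by
            refine Finset.sum_congr rfl fun l _ => ?_
            have hcoef : ∑ i, ∑ k, c i k l * ν i k * Real.log (μ l)
                = (∑ i, ∑ k, c i k l * ν i k) * Real.log (μ l) := by
              rw [Finset.sum_mul]
              exact Finset.sum_congr rfl fun i _ => (Finset.sum_mul _ _ _).symm
            rw [hcoef]
            congr 1
            rw [hμdec l]
            refine Finset.sum_congr rfl fun i _ => ?_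
            rw [Finset.mul_sum]
            refine Finset.sum_congr rfl fun k _ => ?_
            rw [hν]
            show c i k l * (p i * lam i k) = p i * (lam i k * c i k l)
            ring
    have e3 : ∑ j, w j * (Real.log (ν j.1 j.2.1) - Real.log (μ j.2.2))
        = ∑ j, w j * Real.log (ν j.1 j.2.1) - ∑ j, w j * Real.log (μ j.2.2) := by
      rw [← Finset.sum_sub_distrib]
      exact Finset.sum_congr rfl fun j _ => by ring
    rw [e3, e1, e2]
    simp only [Real.negMulLog, neg_mul, Finset.sum_neg_distrib]
    ring
  -- Jensen / Cauchy-Schwarz chain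
  set Q : ℝ := ∑ j, w j * y j with hQdef
  have hJen : ∑ j, w j * Real.log (y j) ≤ Real.log Q := jensen_log w y hw0 hwsum hypos
  have hterm : ∀ j : Fin n × Fin d × Fin d,
      w j * (Real.log (ν j.1 j.2.1) - Real.log (μ j.2.2)) = -2 * (w j * Real.log (y j)) := by
    intro j
    by_cases hj : w j = 0
    · rw [hj]; ring
    · have hcj : c j.1 j.2.1 j.2.2 ≠ 0 := fun h => hj (by rw [hwdef]; simp [h])
      have hνj : ν j.1 j.2.1 ≠ 0 := fun h => hj (by rw [hwdef]; simp [h])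
      have hνpos : 0 < ν j.1 j.2.1 := lt_of_le_of_ne (hν0 _ _) (Ne.symm hνj)
      have hcpos : 0 < c j.1 j.2.1 j.2.2 := lt_of_le_of_ne (hc0 _ _ _) (Ne.symm hcj)
      have hμpos : 0 < μ j.2.2 := lt_of_lt_of_le (mul_pos hνpos hcpos) (hμlb j.1 j.2.1 j.2.2)
      have hylog : Real.log (y j) = (Real.log (μ j.2.2) - Real.log (ν j.1 j.2.1)) / 2 := by
        rw [hydef]
        show Real.log (Real.sqrt (μ j.2.2 / ν j.1 j.2.1)) = _
        rw [Real.log_sqrt (div_nonneg (hμ0 _) (hν0 _ _)),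
          Real.log_div (ne_of_gt hμpos) hνj]
      rw [hylog]; ring
  have hSlow : ∑ l, Real.negMulLog (μ l) - ∑ i, ∑ k, Real.negMulLog (ν i k)
      ≥ -2 * Real.log Q := by
    rw [Sid, Finset.sum_congr rfl fun j _ => hterm j, ← Finset.mul_sum]
    nlinarith [hJen]
  have hQpos : 0 < Q := by
    have hne : ∑ j, w j ≠ 0 := by rw [hwsum]; norm_num
    obtain ⟨j0, _, hj0⟩ := Finset.exists_ne_zero_of_sum_ne_zero hne
    have hterm0 : 0 < w j0 * y j0 :=
      mul_pos (lt_of_le_of_ne (hw0 j0) (Ne.symm hj0)) (hypos j0 hj0)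
    have hle : w j0 * y j0 ≤ Q := by
      rw [hQdef]
      exact Finset.single_le_sum (f := fun j => w j * y j)
        (fun j _ => mul_nonneg (hw0 j) (hy0 j)) (Finset.mem_univ j0)
    linarith
  -- evaluation of Q
  have hwy : ∀ j : Fin n × Fin d × Fin d,
      w j * y j = c j.1 j.2.1 j.2.2 * (Real.sqrt (ν j.1 j.2.1) * Real.sqrt (μ j.2.2)) := by
    intro j
    by_cases hν' : ν j.1 j.2.1 = 0
    · rw [hwdef, hydef]
      show c j.1 j.2.1 j.2.2 * ν j.1 j.2.1 * Real.sqrt (μ j.2.2 / ν j.1 j.2.1)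
        = c j.1 j.2.1 j.2.2 * (Real.sqrt (ν j.1 j.2.1) * Real.sqrt (μ j.2.2))
      rw [hν']
      simp
    · have hνpos : 0 < ν j.1 j.2.1 := lt_of_le_of_ne (hν0 _ _) (Ne.symm hν')
      have key : ν j.1 j.2.1 * Real.sqrt (μ j.2.2 / ν j.1 j.2.1)
          = Real.sqrt (ν j.1 j.2.1) * Real.sqrt (μ j.2.2) := by
        rw [div_eq_mul_inv, Real.sqrt_mul (hμ0 _), Real.sqrt_inv]
        rw [show ν j.1 j.2.1 * (Real.sqrt (μ j.2.2) * (Real.sqrt (ν j.1 j.2.1))⁻¹)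
            = (ν j.1 j.2.1 / Real.sqrt (ν j.1 j.2.1)) * Real.sqrt (μ j.2.2) by ring]
        rw [Real.div_sqrt]
      rw [hwdef, hydef]
      show c j.1 j.2.1 j.2.2 * ν j.1 j.2.1 * Real.sqrt (μ j.2.2 / ν j.1 j.2.1)
        = c j.1 j.2.1 j.2.2 * (Real.sqrt (ν j.1 j.2.1) * Real.sqrt (μ j.2.2))
      rw [mul_assoc, key]
  have hsi : ∀ i, (((hρ i).sqrt * hσ.sqrt).trace).re
      = ∑ k, ∑ l, Real.sqrt (lam i k) * Real.sqrt (μ l) * c i k l := by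
    intro i
    rw [trace_sqrt_mul_sqrt (hρ i) hσ, Complex.ofReal_re]
  have hQeval : Q = ∑ i, Real.sqrt (p i) *
      (∑ k, ∑ l, Real.sqrt (lam i k) * Real.sqrt (μ l) * c i k l) := by
    rw [hQdef]
    calc ∑ j, w j * y j
        = ∑ i, ∑ k, ∑ l, c i k l * (Real.sqrt (ν i k) * Real.sqrt (μ l)) := by
          rw [Fintype.sum_prod_type]
          refine Finset.sum_congr rfl fun i _ => ?_
          rw [Fintype.sum_prod_type]
          exact Finset.sum_congr rfl fun k _ => Finset.sum_congr rfl fun l _ => hwy (i, k, l)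
      _ = ∑ i, Real.sqrt (p i) *
            (∑ k, ∑ l, Real.sqrt (lam i k) * Real.sqrt (μ l) * c i k l) := by
          refine Finset.sum_congr rfl fun i _ => ?_
          rw [Finset.mul_sum]
          refine Finset.sum_congr rfl fun k _ => ?_
          rw [Finset.mul_sum]
          refine Finset.sum_congr rfl fun l _ => ?_
          rw [hν]
          show c i k l * (Real.sqrt (p i * lam i k) * Real.sqrt (μ l))
              = Real.sqrt (p i) * (Real.sqrt (lam i k) * Real.sqrt (μ l) * c i k l)
          rw [Real.sqrt_mul (hp i)]
          ring
  set A : Matrix (Fin d) (Fin d) ℂ := ∑ i, ((Real.sqrt (p i) : ℂ)) • (hρ i).sqrt with hAdef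
  have hAmul : A * hσ.sqrt = ∑ i, ((Real.sqrt (p i) : ℂ)) • ((hρ i).sqrt * hσ.sqrt) := by
    rw [hAdef, Finset.sum_mul]
    exact Finset.sum_congr rfl fun i _ => smul_mul_assoc _ _ _
  have hQmat : ((A * hσ.sqrt).trace).re = Q := by
    rw [hAmul, Matrix.trace_sum, Complex.re_sum]
    have hper : ∀ i, ((((Real.sqrt (p i) : ℂ)) • ((hρ i).sqrt * hσ.sqrt)).trace).re
        = Real.sqrt (p i) * (((hρ i).sqrt * hσ.sqrt).trace).re := by
      intro i
      rw [Matrix.trace_smul, smul_eq_mul]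
      simp [Complex.mul_re]
    rw [Finset.sum_congr rfl fun i _ => hper i, hQeval]
    exact Finset.sum_congr rfl fun i _ => by rw [hsi i]
  have hAherm : A.IsHermitian := by
    have hper : ∀ i : Fin n, (((Real.sqrt (p i) : ℂ)) • (hρ i).sqrt).IsHermitian :=
      fun i => (psd_real_smul (hρ i).posSemidef_sqrt (Real.sqrt_nonneg _)).1
    unfold Matrix.IsHermitian
    rw [hAdef, Matrix.conjTranspose_sum]
    exact Finset.sum_congr rfl fun i _ => hper i
  have hCS := cs_trace hAherm hσ.posSemidef_sqrt.1
  have hσs1 : ((hσ.sqrt * hσ.sqrt).trace).re = 1 := by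
    rw [hσ.sqrt_mul_self, hσtr]
    rfl
  set TS : ℝ := ((A * A).trace).re with hTSdef
  have hQ2 : Q ^ 2 ≤ TS := by
    rw [hQmat, hσs1, mul_one] at hCS
    exact hCS
  -- the overlap matrix and the value of TS
  set t : Fin n → Fin n → ℝ := fun i j => (((hρ i).sqrt * (hρ j).sqrt).trace).re with htdef
  have htsym : ∀ i j, t i j = t j i := by
    intro i j
    show (((hρ i).sqrt * (hρ j).sqrt).trace).re = (((hρ j).sqrt * (hρ i).sqrt).trace).re
    rw [Matrix.trace_mul_comm]
  have htnn : ∀ i j, 0 ≤ t i j := by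
    intro i j
    show 0 ≤ (((hρ i).sqrt * (hρ j).sqrt).trace).re
    rw [trace_sqrt_mul_sqrt (hρ i) (hρ j), Complex.ofReal_re]
    exact Finset.sum_nonneg fun k _ => Finset.sum_nonneg fun l _ =>
      mul_nonneg (mul_nonneg (Real.sqrt_nonneg _) (Real.sqrt_nonneg _)) (sq_nonneg _)
  have htd : ∀ i, t i i = 1 := by
    intro i
    show (((hρ i).sqrt * (hρ i).sqrt).trace).re = 1
    rw [(hρ i).sqrt_mul_self, hρtr i]
    rfl
  have hTS : TS = 1 + 2 * ∑ i, ∑ j,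
      (if i < j then Real.sqrt (p i * p j) * t i j else 0) := by
    have hAA : A * A = ∑ i, ∑ j, (((Real.sqrt (p i) * Real.sqrt (p j) : ℝ) : ℂ)) •
        ((hρ i).sqrt * (hρ j).sqrt) := by
      rw [hAdef, Finset.sum_mul_sum]
      refine Finset.sum_congr rfl fun i _ => Finset.sum_congr rfl fun j _ => ?_
      rw [smul_mul_assoc, mul_smul_comm, smul_smul]
      congr 1
      push_cast
      ring
    have hTSe : TS = ∑ i, ∑ j, Real.sqrt (p i) * Real.sqrt (p j) * t i j := by
      rw [hTSdef, hAA, Matrix.trace_sum, Complex.re_sum]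
      refine Finset.sum_congr rfl fun i _ => ?_
      rw [Matrix.trace_sum, Complex.re_sum]
      refine Finset.sum_congr rfl fun j _ => ?_
      rw [Matrix.trace_smul, smul_eq_mul]
      show ((((Real.sqrt (p i) * Real.sqrt (p j) : ℝ) : ℂ)) *
        (((hρ i).sqrt * (hρ j).sqrt).trace)).re = _
      simp [Complex.mul_re]
      left; rfl
    rw [hTSe, sum_sym (fun i j => Real.sqrt (p i) * Real.sqrt (p j) * t i j)
      (fun i j => by
        show Real.sqrt (p i) * Real.sqrt (p j) * t i j
          = Real.sqrt (p j) * Real.sqrt (p i) * t j i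
        rw [htsym i j]; ring)]
    have hdiag : ∑ i, Real.sqrt (p i) * Real.sqrt (p i) * t i i = 1 := by
      refine Eq.trans (Finset.sum_congr rfl fun i _ => ?_) hp1
      rw [htd i, mul_one, Real.mul_self_sqrt (hp i)]
    rw [hdiag]
    congr 2
    refine Finset.sum_congr rfl fun i _ => Finset.sum_congr rfl fun j _ => ?_
    by_cases h : i < j
    · simp [h, Real.sqrt_mul (hp i)]
    · simp [h]
  -- entropies
  have hvNσ : vN σ = ∑ l, Real.negMulLog (μ l) := by
    simp only [vN]
    rw [dif_pos hσ.1]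
  have hvNρ : ∀ i, vN (ρ i) = ∑ k, Real.negMulLog (lam i k) := by
    intro i
    simp only [vN]
    rw [dif_pos (hρ i).1]
  have hdecomp : ∑ i, ∑ k, Real.negMulLog (ν i k)
      = ∑ i, p i * vN (ρ i) + ∑ i, Real.negMulLog (p i) := by
    rw [← Finset.sum_add_distrib]
    refine Finset.sum_congr rfl fun i _ => ?_
    rw [hvNρ i]
    calc ∑ k, Real.negMulLog (ν i k)
        = ∑ k, (lam i k * Real.negMulLog (p i) + p i * Real.negMulLog (lam i k)) := by
          refine Finset.sum_congr rfl fun k _ => ?_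
          rw [hν]
          exact Real.negMulLog_mul _ _
      _ = p i * ∑ k, Real.negMulLog (lam i k) + Real.negMulLog (p i) := by
          rw [Finset.sum_add_distrib, ← Finset.sum_mul, ← Finset.mul_sum, hlamsum i, one_mul]
          ring
  have hmain : vN σ - ∑ i, p i * vN (ρ i) ≥ (∑ i, Real.negMulLog (p i)) - Real.log TS := by
    have hlogQ : Real.log (Q ^ 2) = 2 * Real.log Q := by
      rw [Real.log_pow]; push_cast; ring
    have hQ2pos : 0 < Q ^ 2 := pow_pos hQpos 2
    have hlog2 : Real.log (Q ^ 2) ≤ Real.log TS := Real.log_le_log hQ2pos hQ2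
    rw [hvNσ]
    have h1 : ∑ l, Real.negMulLog (μ l) - ∑ i, ∑ k, Real.negMulLog (ν i k)
        ≥ - Real.log TS := by linarith [hSlow]
    linarith [hdecomp]
  -- part 1
  have hpart1 : ∀ i j, 0 ≤ ((msqrt (ρ i) * msqrt (ρ j)).trace).re := by
    intro i j
    rw [hmsqrt i, hmsqrt j]
    exact htnn i j
  have harg : (1 + 2 * ∑ i, ∑ j, if i < j then
      Real.sqrt (p i * p j) * ((msqrt (ρ i) * msqrt (ρ j)).trace).re else 0) = TS := by
    rw [hTS]
    congr 2
    refine Finset.sum_congr rfl fun i _ => Finset.sum_congr rfl fun j _ => ?_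
    by_cases h : i < j
    · simp only [h, if_true]
      rw [hmsqrt i, hmsqrt j]
    · simp [h]
  have hfid : ∀ i j, t i j ≤ fidelity (ρ i) (ρ j) := by
    intro i j
    have hself : ((hρ i).sqrt)ᴴ = (hρ i).sqrt := (hρ i).posSemidef_sqrt.1
    have hM : ((hρ i).sqrt * (ρ j) * (hρ i).sqrt).PosSemidef := by
      have h := (hρ j).mul_mul_conjTranspose_same ((hρ i).sqrt)
      rw [hself] at h
      exact h
    have hfe : fidelity (ρ i) (ρ j) = ((hM.sqrt).trace).re := by
      show ((msqrt (msqrt (ρ i) * ρ j * msqrt (ρ i))).trace).re = _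
      rw [hmsqrt i]
      rw [show msqrt ((hρ i).sqrt * ρ j * (hρ i).sqrt) = hM.sqrt from dif_pos hM]
    rw [hfe]
    exact overlap_le_tr_sqrt (hρ i) (hρ j) hM
  refine ⟨hpart1, ?_, ?_⟩
  · rw [harg]
    exact hmain
  · have hargpos : (0:ℝ) < 1 + 2 * ∑ i, ∑ j, if i < j then
        Real.sqrt (p i * p j) * ((msqrt (ρ i) * msqrt (ρ j)).trace).re else 0 := by
      rw [harg]
      have := pow_pos hQpos 2
      linarith [hQ2]
    have hle : (1 + 2 * ∑ i, ∑ j, if i < j then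
          Real.sqrt (p i * p j) * ((msqrt (ρ i) * msqrt (ρ j)).trace).re else 0)
        ≤ (1 + 2 * ∑ i, ∑ j, if i < j then
          Real.sqrt (p i * p j) * fidelity (ρ i) (ρ j) else 0) := by
      have hsum : (∑ i, ∑ j, if i < j then
            Real.sqrt (p i * p j) * ((msqrt (ρ i) * msqrt (ρ j)).trace).re else 0)
          ≤ ∑ i, ∑ j, if i < j then Real.sqrt (p i * p j) * fidelity (ρ i) (ρ j) else 0 := by
        refine Finset.sum_le_sum fun i _ => Finset.sum_le_sum fun j _ => ?_
        by_cases h : i < j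
        · simp only [h, if_true]
          rw [hmsqrt i, hmsqrt j]
          exact mul_le_mul_of_nonneg_left (hfid i j) (Real.sqrt_nonneg _)
        · simp [h]
      linarith
    have hlog := Real.log_le_log hargpos hle
    have hge := hmain
    rw [← harg] at hge
    linarith [hge, hlog]
end
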